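/- (Lemma 1, sufficiency.) Let r₁, r₂, r₃, r₄ be a solution of the four-body system in the center-of-mass frame whose initial data satisfy mω r₂₄(0) = p₁₃(0) and p₂₄(0) = −mω r₁₃(0). Then r₂(t) = r₁(t + τ) for all t ∈ ℝ, where τ = π/(2ω). -/

import Mathlib

noncomputable section

open Real Set
open scoped NNReal

/-- The Euclidean plane. -/
abbrev Plane : Type := EuclideanSpace ℝ (Fin 2)

/-- Global uniqueness for an autonomous Lipschitz ODE on ℝ. -/
lemma ode_unique_global {E : Type*} [NormedAddCommGroup E] [NormedSpace ℝ E]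
    {v : E → E} {K : ℝ≥0} (hv : LipschitzWith K v) {f g : ℝ → E}
    (hf : ∀ t, HasDerivAt f (v (f t)) t) (hg : ∀ t, HasDerivAt g (v (g t)) t)
    (h0 : f 0 = g 0) : ∀ t, f t = g t := by
  intro t
  have hmem : t ∈ Ioo (-(|t|+1)) (|t|+1) := by
    constructor <;> [nlinarith [neg_abs_le t]; nlinarith [le_abs_self t]]
  have h0mem : (0:ℝ) ∈ Ioo (-(|t|+1)) (|t|+1) := by
    constructor <;> nlinarith [abs_nonneg t]
  exact ODE_solution_unique_of_mem_Ioo (v := fun _ => v) (s := fun _ => univ)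
    (fun _ _ => (hv.lipschitzOnWith)) h0mem
    (fun t' _ => ⟨hf t', trivial⟩) (fun t' _ => ⟨hg t', trivial⟩) h0 hmem

/-- Uniqueness for the second-order linear ODE `x'' = c • x` in the plane. -/
lemma second_order_unique {c : ℝ} {f f' g g' : ℝ → Plane}
    (hf : ∀ t, HasDerivAt f (f' t) t) (hf' : ∀ t, HasDerivAt f' (c • f t) t)
    (hg : ∀ t, HasDerivAt g (g' t) t) (hg' : ∀ t, HasDerivAt g' (c • g t) t)
    (h0 : f 0 = g 0) (h0' : f' 0 = g' 0) : ∀ t, f t = g t := by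
  set L : (Plane × Plane) →L[ℝ] (Plane × Plane) :=
    (ContinuousLinearMap.snd ℝ Plane Plane).prod
      (c • ContinuousLinearMap.fst ℝ Plane Plane) with hLdef
  have hL : LipschitzWith ‖L‖₊ (fun x => L x) := L.lipschitz
  have hF : ∀ t, HasDerivAt (fun t => (f t, f' t)) (L (f t, f' t)) t := fun t => by
    simpa [hLdef] using (hf t).prodMk (hf' t)
  have hG : ∀ t, HasDerivAt (fun t => (g t, g' t)) (L (g t, g' t)) t := fun t => by
    simpa [hLdef] using (hg t).prodMk (hg' t)
  intro t
  exact congrArg Prod.fst (ode_unique_global hL hF hG (by rw [h0, h0']) t)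

/-- A curve with vanishing second derivative and zero initial data vanishes. -/
lemma zero_formula {f f' : ℝ → Plane} (hf : ∀ t, HasDerivAt f (f' t) t)
    (hf' : ∀ t, HasDerivAt f' 0 t) (h0 : f 0 = 0) (h0' : f' 0 = 0) : ∀ t, f t = 0 :=
  second_order_unique (c := 0) hf (fun t => by simpa using hf' t)
    (g := fun _ => 0) (g' := fun _ => 0) (fun t => hasDerivAt_const t 0)
    (fun t => by simpa using hasDerivAt_const t (0 : Plane)) h0 h0'

/-- Explicit solution of the harmonic oscillator `x'' = -k² x` in the plane. -/
lemma osc_formula {k : ℝ} (hk : k ≠ 0) {f f' : ℝ → Plane}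
    (hf : ∀ t, HasDerivAt f (f' t) t) (hf' : ∀ t, HasDerivAt f' ((-(k^2)) • f t) t) :
    ∀ t, f t = Real.cos (k*t) • f 0 + Real.sin (k*t) • (k⁻¹ • f' 0) := by
  set A := f 0 with hA
  set B := k⁻¹ • f' 0 with hB
  have hc : ∀ t : ℝ, HasDerivAt (fun t : ℝ => Real.cos (k*t)) (-(k * Real.sin (k*t))) t := by
    intro t
    simpa [mul_comm] using ((hasDerivAt_id t).const_mul k).cos
  have hs : ∀ t : ℝ, HasDerivAt (fun t : ℝ => Real.sin (k*t)) (k * Real.cos (k*t)) t := by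
    intro t
    simpa [mul_comm] using ((hasDerivAt_id t).const_mul k).sin
  have hg : ∀ t : ℝ, HasDerivAt (fun t => Real.cos (k*t) • A + Real.sin (k*t) • B)
      ((-(k * Real.sin (k*t))) • A + (k * Real.cos (k*t)) • B) t := fun t =>
    ((hc t).smul_const A).add ((hs t).smul_const B)
  have hg' : ∀ t : ℝ, HasDerivAt
      (fun t => (-(k * Real.sin (k*t))) • A + (k * Real.cos (k*t)) • B)
      ((-(k^2)) • (Real.cos (k*t) • A + Real.sin (k*t) • B)) t := by
    intro t
    have h1 : HasDerivAt (fun t : ℝ => -(k * Real.sin (k*t))) (-(k * (k * Real.cos (k*t)))) t :=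
      ((hs t).const_mul k).neg
    have h2 : HasDerivAt (fun t : ℝ => k * Real.cos (k*t)) (k * -(k * Real.sin (k*t))) t :=
      (hc t).const_mul k
    have := (h1.smul_const A).add (h2.smul_const B)
    refine this.congr_deriv ?_
    module
  refine second_order_unique hf hf' hg hg' ?_ ?_
  · simp [hA]
  · simp [hB, smul_smul, mul_inv_cancel₀ hk]

/-- A solution of the planar four-body system with pairwise quadratic potential
`V = (mω²/4)(2‖r₁−r₂‖² + 2‖r₂−r₃‖² + 2‖r₃−r₄‖² + 2‖r₁−r₄‖² − ‖r₁−r₃‖² − ‖r₂−r₄‖²)`: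
four twice differentiable curves satisfying Newton's equations
`rᵢ'' = −ω²((rᵢ − r_{i+1}) + (rᵢ − r_{i−1}) − ½(rᵢ − r_{i+2}))` (indices mod 4). -/
def IsFourBodySolution (ω : ℝ) (r₁ r₂ r₃ r₄ : ℝ → Plane) : Prop :=
  (Differentiable ℝ r₁ ∧ Differentiable ℝ (deriv r₁)) ∧
  (Differentiable ℝ r₂ ∧ Differentiable ℝ (deriv r₂)) ∧
  (Differentiable ℝ r₃ ∧ Differentiable ℝ (deriv r₃)) ∧
  (Differentiable ℝ r₄ ∧ Differentiable ℝ (deriv r₄)) ∧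
  (∀ t : ℝ, deriv (deriv r₁) t =
    (-(ω ^ 2)) • ((r₁ t - r₂ t) + (r₁ t - r₄ t) - (1 / 2 : ℝ) • (r₁ t - r₃ t))) ∧
  (∀ t : ℝ, deriv (deriv r₂) t =
    (-(ω ^ 2)) • ((r₂ t - r₃ t) + (r₂ t - r₁ t) - (1 / 2 : ℝ) • (r₂ t - r₄ t))) ∧
  (∀ t : ℝ, deriv (deriv r₃) t =
    (-(ω ^ 2)) • ((r₃ t - r₄ t) + (r₃ t - r₂ t) - (1 / 2 : ℝ) • (r₃ t - r₁ t))) ∧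
  (∀ t : ℝ, deriv (deriv r₄) t =
    (-(ω ^ 2)) • ((r₄ t - r₁ t) + (r₄ t - r₃ t) - (1 / 2 : ℝ) • (r₄ t - r₂ t)))

/-- **Lemma 1, sufficiency.** If the initial data of a center-of-mass-frame
solution satisfy `mω r₂₄(0) = p₁₃(0)` and `p₂₄(0) = −mω r₁₃(0)`, then
`r₂(t) = r₁(t + τ)` with `τ = π/(2ω)`. -/
theorem choreography_sufficiency (m ω : ℝ) (hm : 0 < m) (hω : 0 < ω)
    (r₁ r₂ r₃ r₄ : ℝ → Plane)
    (hsol : IsFourBodySolution ω r₁ r₂ r₃ r₄)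
    (hcomr : r₁ 0 + r₂ 0 + r₃ 0 + r₄ 0 = 0)
    (hcomp : m • deriv r₁ 0 + m • deriv r₂ 0 + m • deriv r₃ 0 + m • deriv r₄ 0 = 0)
    (hcos : (m * ω) • (r₂ 0 - r₄ 0) = m • deriv r₁ 0 - m • deriv r₃ 0)
    (hsin : m • deriv r₂ 0 - m • deriv r₄ 0 = (-(m * ω)) • (r₁ 0 - r₃ 0)) :
    ∀ t : ℝ, r₂ t = r₁ (t + Real.pi / (2 * ω)) := by
  obtain ⟨⟨hd1, hd1'⟩, ⟨hd2, hd2'⟩, ⟨hd3, hd3'⟩, ⟨hd4, hd4'⟩, he1, he2, he3, he4⟩ := hsol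
  have h1 : ∀ t, HasDerivAt r₁ (deriv r₁ t) t := fun t => (hd1 t).hasDerivAt
  have h2 : ∀ t, HasDerivAt r₂ (deriv r₂ t) t := fun t => (hd2 t).hasDerivAt
  have h3 : ∀ t, HasDerivAt r₃ (deriv r₃ t) t := fun t => (hd3 t).hasDerivAt
  have h4 : ∀ t, HasDerivAt r₄ (deriv r₄ t) t := fun t => (hd4 t).hasDerivAt
  have h1' : ∀ t, HasDerivAt (deriv r₁)
      ((-(ω ^ 2)) • ((r₁ t - r₂ t) + (r₁ t - r₄ t) - (1 / 2 : ℝ) • (r₁ t - r₃ t))) t :=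
    fun t => he1 t ▸ (hd1' t).hasDerivAt
  have h2' : ∀ t, HasDerivAt (deriv r₂)
      ((-(ω ^ 2)) • ((r₂ t - r₃ t) + (r₂ t - r₁ t) - (1 / 2 : ℝ) • (r₂ t - r₄ t))) t :=
    fun t => he2 t ▸ (hd2' t).hasDerivAt
  have h3' : ∀ t, HasDerivAt (deriv r₃)
      ((-(ω ^ 2)) • ((r₃ t - r₄ t) + (r₃ t - r₂ t) - (1 / 2 : ℝ) • (r₃ t - r₁ t))) t :=
    fun t => he3 t ▸ (hd3' t).hasDerivAt
  have h4' : ∀ t, HasDerivAt (deriv r₄)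
      ((-(ω ^ 2)) • ((r₄ t - r₁ t) + (r₄ t - r₃ t) - (1 / 2 : ℝ) • (r₄ t - r₂ t))) t :=
    fun t => he4 t ▸ (hd4' t).hasDerivAt
  -- center of mass stays at 0
  have hs : ∀ t, r₁ t + r₂ t + r₃ t + r₄ t = 0 := by
    apply zero_formula
      (f' := fun t => deriv r₁ t + deriv r₂ t + deriv r₃ t + deriv r₄ t)
      (fun t => (((h1 t).add (h2 t)).add (h3 t)).add (h4 t))
    · intro t
      have := (((h1' t).add (h2' t)).add (h3' t)).add (h4' t)
      refine this.congr_deriv ?_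
      module
    · exact hcomr
    · have : m • (deriv r₁ 0 + deriv r₂ 0 + deriv r₃ 0 + deriv r₄ 0) = m • (0 : Plane) := by
        rw [smul_zero]; rw [← hcomp]; module
      exact smul_right_injective Plane hm.ne' this
  -- the oscillating differences r₁ - r₃ and r₂ - r₄ (frequency ω)
  have Ea : ∀ t, r₁ t - r₃ t = Real.cos (ω*t) • (r₁ 0 - r₃ 0)
      + Real.sin (ω*t) • (ω⁻¹ • (deriv r₁ 0 - deriv r₃ 0)) := by
    intro t
    simpa using osc_formula hω.ne' (f := fun t => r₁ t - r₃ t)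
      (f' := fun t => deriv r₁ t - deriv r₃ t)
      (fun t => (h1 t).sub (h3 t))
      (fun t => by
        have := (h1' t).sub (h3' t)
        refine this.congr_deriv ?_
        module) t
  have Eb : ∀ t, r₂ t - r₄ t = Real.cos (ω*t) • (r₂ 0 - r₄ 0)
      + Real.sin (ω*t) • (ω⁻¹ • (deriv r₂ 0 - deriv r₄ 0)) := by
    intro t
    simpa using osc_formula hω.ne' (f := fun t => r₂ t - r₄ t)
      (f' := fun t => deriv r₂ t - deriv r₄ t)
      (fun t => (h2 t).sub (h4 t))
      (fun t => by
        have := (h2' t).sub (h4' t)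
        refine this.congr_deriv ?_
        module) t
  -- the sum r₁ + r₃ oscillates with frequency 2ω
  have h2ω : (2*ω) ≠ 0 := by positivity
  have Eq' : ∀ t, r₁ t + r₃ t = Real.cos (2*ω*t) • (r₁ 0 + r₃ 0)
      + Real.sin (2*ω*t) • ((2*ω)⁻¹ • (deriv r₁ 0 + deriv r₃ 0)) := by
    intro t
    have := osc_formula h2ω (f := fun t => r₁ t + r₃ t)
      (f' := fun t => deriv r₁ t + deriv r₃ t)
      (fun t => (h1 t).add (h3 t))
      (fun t => by
        have h := (h1' t).add (h3' t)
        refine h.congr_deriv (Eq.symm ?_)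
        have hst := hs t
        linear_combination (norm := module) (-2*ω^2 : ℝ) • hst) t
    simpa [mul_assoc] using this
  -- initial-condition relations, with the mass m cancelled
  have C1 : r₂ 0 - r₄ 0 = ω⁻¹ • (deriv r₁ 0 - deriv r₃ 0) := by
    have hmc : m • (ω • (r₂ 0 - r₄ 0)) = m • (deriv r₁ 0 - deriv r₃ 0) := by
      linear_combination (norm := module) hcos
    have := smul_right_injective Plane hm.ne' hmc
    rw [← this, inv_smul_smul₀ hω.ne']
  have C2 : ω⁻¹ • (deriv r₂ 0 - deriv r₄ 0) = -(r₁ 0 - r₃ 0) := by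
    have hmc : m • (deriv r₂ 0 - deriv r₄ 0) = m • ((-ω) • (r₁ 0 - r₃ 0)) := by
      linear_combination (norm := module) hsin
    have := smul_right_injective Plane hm.ne' hmc
    rw [this, smul_smul]
    rw [show ω⁻¹ * (-ω) = -1 by field_simp]
    module
  -- now evaluate everything at t and t + τ
  intro t
  have hτ1 : ω * (t + Real.pi / (2 * ω)) = ω * t + Real.pi / 2 := by field_simp
  have hτ2 : 2 * ω * (t + Real.pi / (2 * ω)) = 2 * ω * t + Real.pi := by field_simp
  have E1 := Ea (t + Real.pi / (2 * ω))
  rw [hτ1, Real.cos_add_pi_div_two, Real.sin_add_pi_div_two] at E1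
  have E2 := Eq' (t + Real.pi / (2 * ω))
  rw [hτ2, Real.cos_add_pi, Real.sin_add_pi] at E2
  have E3 := Eb t
  have E4 := Eq' t
  have E5 := hs t
  linear_combination (norm := module) (1/2 : ℝ) • E3 - (1/2 : ℝ) • E4 + (1/2 : ℝ) • E5
    - (1/2 : ℝ) • E1 - (1/2 : ℝ) • E2 + (Real.cos (ω*t)/2) • C1 + (Real.sin (ω*t)/2) • C2
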